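/- arXiv:math/0611932 — 5 statements merged into one kernel-verified Lean document; each statement's English description precedes it below -/
import Mathlib

section
/- For any stochastic r×r real matrices A_1, A_2, …, A_k (k ≥ 1), δ(A_k A_{k−1} ⋯ A_1) ≤ ∏_{i=1}^k λ(A_i). -/
/-- `δ(A) = max_j max_{i₁,i₂} |A_{i₁ j} - A_{i₂ j}|`. -/
noncomputable def matDelta {r : ℕ} (A : Matrix (Fin r) (Fin r) ℝ) : ℝ :=
  ⨆ j, ⨆ i₁, ⨆ i₂, |A i₁ j - A i₂ j|

/-- `λ(A) = 1 - min_{i₁,i₂} Σ_j min (A_{i₁ j}) (A_{i₂ j})`. -/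
noncomputable def matLambda {r : ℕ} (A : Matrix (Fin r) (Fin r) ℝ) : ℝ :=
  1 - ⨅ i₁, ⨅ i₂, ∑ j, min (A i₁ j) (A i₂ j)

lemma myBdd {α : Type*} [Finite α] (f : α → ℝ) : BddAbove (Set.range f) :=
  (Set.finite_range f).bddAbove

lemma myBddB {α : Type*} [Finite α] (f : α → ℝ) : BddBelow (Set.range f) :=
  (Set.finite_range f).bddBelow

section
variable {r : ℕ}

lemma abs_le_matDelta [NeZero r] (B : Matrix (Fin r) (Fin r) ℝ) (i₁ i₂ j : Fin r) :
    |B i₁ j - B i₂ j| ≤ matDelta B := by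
  calc |B i₁ j - B i₂ j| ≤ ⨆ i₂', |B i₁ j - B i₂' j| :=
        le_ciSup (f := fun i₂' => |B i₁ j - B i₂' j|) (myBdd _) i₂
    _ ≤ ⨆ i₁', ⨆ i₂', |B i₁' j - B i₂' j| :=
        le_ciSup (f := fun i₁' => ⨆ i₂', |B i₁' j - B i₂' j|) (myBdd _) i₁
    _ ≤ matDelta B :=
        le_ciSup (f := fun j => ⨆ i₁', ⨆ i₂', |B i₁' j - B i₂' j|) (myBdd _) j

lemma matDelta_nonneg [NeZero r] (B : Matrix (Fin r) (Fin r) ℝ) : 0 ≤ matDelta B := by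
  have i : Fin r := Classical.arbitrary _
  have := abs_le_matDelta B i i i
  simpa using this.trans_eq' (by simp)

lemma matDelta_le [NeZero r] (B : Matrix (Fin r) (Fin r) ℝ) (c : ℝ)
    (h : ∀ i₁ i₂ j, |B i₁ j - B i₂ j| ≤ c) : matDelta B ≤ c :=
  ciSup_le fun j => ciSup_le fun i₁ => ciSup_le fun i₂ => h i₁ i₂ j

lemma matLambda_nonneg (A : Matrix (Fin r) (Fin r) ℝ)
    (h0 : ∀ i j, 0 ≤ A i j) (h1 : ∀ i, ∑ j, A i j = 1) : 0 ≤ matLambda A := by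
  rcases Nat.eq_zero_or_pos r with hr | hr
  · subst hr
    simp [matLambda, iInf_of_isEmpty, Real.sInf_empty]
  haveI : NeZero r := ⟨hr.ne'⟩
  have i : Fin r := Classical.arbitrary _
  have h2 : (⨅ i₁, ⨅ i₂, ∑ j, min (A i₁ j) (A i₂ j)) ≤ ∑ j, min (A i j) (A i j) := by
    refine le_trans (ciInf_le (f := fun i₁ => ⨅ i₂, ∑ j, min (A i₁ j) (A i₂ j)) (myBddB _) i)
      (ciInf_le (myBddB _) i)
  simp only [min_self] at h2
  rw [h1 i] at h2
  simp only [matLambda]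
  linarith

/-- key inequality, one-sided. -/
lemma key [NeZero r] (A B : Matrix (Fin r) (Fin r) ℝ)
    (h0 : ∀ i j, 0 ≤ A i j) (h1 : ∀ i, ∑ j, A i j = 1) (i₁ i₂ j : Fin r) :
    (A * B) i₁ j - (A * B) i₂ j ≤ matLambda A * matDelta B := by
  set c : Fin r → ℝ := fun s => min (A i₁ s) (A i₂ s) with hc
  set μ : ℝ := 1 - ∑ s, c s with hμ
  set M : ℝ := ⨆ s, B s j with hM
  set m : ℝ := ⨅ s, B s j with hm
  have hu : ∀ s, 0 ≤ A i₁ s - c s := fun s => by simp [hc, sub_nonneg]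
  have hv : ∀ s, 0 ≤ A i₂ s - c s := fun s => by simp [hc, sub_nonneg]
  have hsum_u : ∑ s, (A i₁ s - c s) = μ := by
    rw [Finset.sum_sub_distrib, h1 i₁, hμ]
  have hsum_v : ∑ s, (A i₂ s - c s) = μ := by
    rw [Finset.sum_sub_distrib, h1 i₂, hμ]
  have hμ0 : 0 ≤ μ := by
    rw [← hsum_u]; exact Finset.sum_nonneg fun s _ => hu s
  have hBM : ∀ s, B s j ≤ M := fun s => le_ciSup (f := fun s => B s j) (myBdd _) s
  have hmB : ∀ s, m ≤ B s j := fun s => ciInf_le (myBddB _) s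
  -- diff rewrite
  have hdiff : (A * B) i₁ j - (A * B) i₂ j
      = ∑ s, (A i₁ s - c s) * B s j - ∑ s, (A i₂ s - c s) * B s j := by
    simp only [Matrix.mul_apply]
    rw [← Finset.sum_sub_distrib, ← Finset.sum_sub_distrib]
    congr 1; ext s; ring
  have hub : ∑ s, (A i₁ s - c s) * B s j ≤ μ * M := by
    calc ∑ s, (A i₁ s - c s) * B s j ≤ ∑ s, (A i₁ s - c s) * M :=
          Finset.sum_le_sum fun s _ => mul_le_mul_of_nonneg_left (hBM s) (hu s)
      _ = μ * M := by rw [← Finset.sum_mul, hsum_u]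
  have hlb : μ * m ≤ ∑ s, (A i₂ s - c s) * B s j := by
    calc μ * m = ∑ s, (A i₂ s - c s) * m := by rw [← Finset.sum_mul, hsum_v]
      _ ≤ ∑ s, (A i₂ s - c s) * B s j :=
          Finset.sum_le_sum fun s _ => mul_le_mul_of_nonneg_left (hmB s) (hv s)
  have step1 : (A * B) i₁ j - (A * B) i₂ j ≤ μ * (M - m) := by
    rw [hdiff, mul_sub]; linarith
  have hmulam : μ ≤ matLambda A := by
    have : (⨅ i₁', ⨅ i₂', ∑ s, min (A i₁' s) (A i₂' s)) ≤ ∑ s, c s :=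
      le_trans (ciInf_le (f := fun i₁' => ⨅ i₂', ∑ s, min (A i₁' s) (A i₂' s)) (myBddB _) i₁)
        (ciInf_le (myBddB _) i₂)
    simp only [matLambda, hμ]; linarith
  -- M - m ≤ matDelta B
  obtain ⟨s₁, hs₁⟩ := Finite.exists_max fun s => B s j
  obtain ⟨s₂, hs₂⟩ := Finite.exists_min fun s => B s j
  have hMd : M ≤ B s₁ j := ciSup_le hs₁
  have hmd : B s₂ j ≤ m := le_ciInf hs₂
  have hMm : M - m ≤ matDelta B := by
    calc M - m ≤ B s₁ j - B s₂ j := by linarith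
      _ ≤ |B s₁ j - B s₂ j| := le_abs_self _
      _ ≤ matDelta B := abs_le_matDelta B s₁ s₂ j
  have hMm0 : 0 ≤ M - m := by
    have s : Fin r := Classical.arbitrary _
    have := hBM s; have := hmB s; linarith
  calc (A * B) i₁ j - (A * B) i₂ j ≤ μ * (M - m) := step1
    _ ≤ matLambda A * matDelta B :=
        mul_le_mul hmulam hMm hMm0 (matLambda_nonneg A h0 h1)

lemma matDelta_mul_le [NeZero r] (A B : Matrix (Fin r) (Fin r) ℝ)
    (h0 : ∀ i j, 0 ≤ A i j) (h1 : ∀ i, ∑ j, A i j = 1) :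
    matDelta (A * B) ≤ matLambda A * matDelta B := by
  refine matDelta_le _ _ fun i₁ i₂ j => abs_sub_le_iff.mpr ⟨key A B h0 h1 i₁ i₂ j, key A B h0 h1 i₂ i₁ j⟩

lemma matDelta_one_le [NeZero r] : matDelta (1 : Matrix (Fin r) (Fin r) ℝ) ≤ 1 := by
  refine matDelta_le _ _ fun i₁ i₂ j => ?_
  rw [abs_sub_le_iff]
  constructor <;> · simp only [Matrix.one_apply] <;> split_ifs <;> norm_num

end


/-- Wolfowitz's lemma: for stochastic matrices `A_1, …, A_k`,
`δ(A_k ⋯ A_1) ≤ ∏ᵢ λ(A_i)`. -/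
theorem delta_prod_le_prod_lambda
    (r k : ℕ) (hk : 1 ≤ k)
    (A : Fin k → Matrix (Fin r) (Fin r) ℝ)
    (hstoch : ∀ m, (∀ i j, 0 ≤ A m i j) ∧ ∀ i, ∑ j, A m i j = 1)
    (P : ℕ → Matrix (Fin r) (Fin r) ℝ)
    (hP0 : P 0 = 1)
    (hPrec : ∀ m (hm : m < k), P (m + 1) = A ⟨m, hm⟩ * P m) :
    matDelta (P k) ≤ ∏ m, matLambda (A m) := by
  rcases Nat.eq_zero_or_pos r with hr | hr
  · subst hr
    have h0 : matDelta (P k) = 0 := by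
      simp [matDelta, iSup_of_empty', Real.sSup_empty]
    have h1 : ∀ m, matLambda (A m) = (1:ℝ) := fun m => by
      simp [matLambda, iInf_of_isEmpty, Real.sInf_empty]
    rw [h0, Finset.prod_congr rfl fun m _ => h1 m]
    simp
  haveI : NeZero r := ⟨hr.ne'⟩
  set g : ℕ → ℝ := fun i => if h : i < k then matLambda (A ⟨i, h⟩) else 1 with hg
  have main : ∀ m, m ≤ k → matDelta (P m) ≤ ∏ i ∈ Finset.range m, g i := by
    intro m
    induction m with
    | zero => intro _; simpa [hP0] using matDelta_one_le
    | succ n ih =>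
      intro hn
      have hnk : n < k := hn
      rw [hPrec n hnk, Finset.prod_range_succ]
      have hA := hstoch ⟨n, hnk⟩
      have hgn : g n = matLambda (A ⟨n, hnk⟩) := by simp [hg, dif_pos hnk]
      calc matDelta (A ⟨n, hnk⟩ * P n) ≤ matLambda (A ⟨n, hnk⟩) * matDelta (P n) :=
            matDelta_mul_le _ _ hA.1 hA.2
        _ ≤ matLambda (A ⟨n, hnk⟩) * ∏ i ∈ Finset.range n, g i :=
            mul_le_mul_of_nonneg_left (ih hnk.le) (matLambda_nonneg _ hA.1 hA.2)
        _ = (∏ i ∈ Finset.range n, g i) * g n := by rw [hgn, mul_comm]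
  have hfin := main k le_rfl
  have hprod : ∏ i ∈ Finset.range k, g i = ∏ m, matLambda (A m) := by
    rw [← Fin.prod_univ_eq_prod_range g k]
    exact Finset.prod_congr rfl fun m _ => by simp [hg, dif_pos m.isLt]
  rwa [hprod] at hfin
end

section
/- Let A be a stochastic n×n real matrix such that the digraph G(A) (edge from i to j iff A_{ji} > 0, self-loops allowed) contains a spanning tree whose root vertex r has a self-loop, i.e. A_{rr} > 0 and every vertex of {1,…,n} is reachable from r along edges of G(A). Then A is SIA: there exists f ∈ ℝ^n such that A^k converges entrywise, as k → ∞, to the rank-one matrix 1 f^T all of whose rows equal f^T. -/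
open Filter Topology

/-- If a stochastic matrix `A` has a digraph (edge from `i` to `j` iff `A j i > 0`)
containing a spanning tree whose root has a self-loop, then `A` is SIA: its powers
converge entrywise to a rank-one matrix `𝟙 fᵀ`. -/
theorem stochastic_spanning_tree_selfloop_isSIA
    (n : ℕ)
    (A : Matrix (Fin n) (Fin n) ℝ)
    (hnonneg : ∀ i j, 0 ≤ A i j)
    (hrow : ∀ i, ∑ j, A i j = 1)
    (r : Fin n) (hself : 0 < A r r)
    (hreach : ∀ v : Fin n, Relation.ReflTransGen (fun i j : Fin n => 0 < A j i) r v) :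
    ∃ f : Fin n → ℝ, ∀ i j, Tendsto (fun m => (A ^ m) i j) atTop (𝓝 (f j)) := by
  classical
  rcases Nat.eq_zero_or_pos n with hn | hn
  · subst hn; exact ⟨0, fun i => i.elim0⟩
  have : NeZero n := ⟨hn.ne'⟩
  have hne : (Finset.univ : Finset (Fin n)).Nonempty := Finset.univ_nonempty
  -- powers are nonnegative with row sums 1
  have hPnn : ∀ k i j, 0 ≤ (A ^ k) i j := by
    intro k
    induction k with
    | zero => intro i j; simp [Matrix.one_apply]; split <;> norm_num
    | succ k ih =>
      intro i j
      rw [pow_succ, Matrix.mul_apply]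
      exact Finset.sum_nonneg fun w _ => mul_nonneg (ih i w) (hnonneg w j)
  have hProw : ∀ k i, ∑ j, (A ^ k) i j = 1 := by
    intro k
    induction k with
    | zero => intro i; simp [Matrix.one_apply]
    | succ k ih =>
      intro i
      simp only [pow_succ, Matrix.mul_apply]
      rw [Finset.sum_comm]
      have : ∀ w : Fin n, ∑ j, (A ^ k) i w * A w j = (A ^ k) i w := by
        intro w; rw [← Finset.mul_sum, hrow, mul_one]
      simp only [this, ih]
  -- upper/lower bounds for stochastic averaging
  have hub : ∀ (S : Matrix (Fin n) (Fin n) ℝ), (∀ i j, 0 ≤ S i j) → (∀ i, ∑ j, S i j = 1) →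
      ∀ (x : Fin n → ℝ) (i : Fin n), ∑ w, S i w * x w ≤ Finset.univ.sup' hne x := by
    intro S hSn hSr x i
    calc ∑ w, S i w * x w ≤ ∑ w, S i w * Finset.univ.sup' hne x := by
          exact Finset.sum_le_sum fun w _ =>
            mul_le_mul_of_nonneg_left (Finset.le_sup' x (Finset.mem_univ w)) (hSn i w)
      _ = Finset.univ.sup' hne x := by rw [← Finset.sum_mul, hSr, one_mul]
  have hlb : ∀ (S : Matrix (Fin n) (Fin n) ℝ), (∀ i j, 0 ≤ S i j) → (∀ i, ∑ j, S i j = 1) →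
      ∀ (x : Fin n → ℝ) (i : Fin n), Finset.univ.inf' hne x ≤ ∑ w, S i w * x w := by
    intro S hSn hSr x i
    calc Finset.univ.inf' hne x = ∑ w, S i w * Finset.univ.inf' hne x := by
          rw [← Finset.sum_mul, hSr, one_mul]
      _ ≤ ∑ w, S i w * x w := Finset.sum_le_sum fun w _ =>
          mul_le_mul_of_nonneg_left (Finset.inf'_le x (Finset.mem_univ w)) (hSn i w)
  -- contraction lemma
  have hcon : ∀ (S : Matrix (Fin n) (Fin n) ℝ), (∀ i j, 0 ≤ S i j) → (∀ i, ∑ j, S i j = 1) →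
      ∀ (δ : ℝ), (∀ i, δ ≤ S i r) → ∀ (x : Fin n → ℝ),
      Finset.univ.sup' hne (fun i => ∑ w, S i w * x w)
        - Finset.univ.inf' hne (fun i => ∑ w, S i w * x w)
      ≤ (1 - δ) * (Finset.univ.sup' hne x - Finset.univ.inf' hne x) := by
    intro S hSn hSr δ hδ x
    set M := Finset.univ.sup' hne x with hM
    set m := Finset.univ.inf' hne x with hm
    have hxrM : x r ≤ M := Finset.le_sup' x (Finset.mem_univ r)
    have hmxr : m ≤ x r := Finset.inf'_le x (Finset.mem_univ r)
    have hupper : ∀ i, ∑ w, S i w * x w ≤ δ * x r + (1 - δ) * M := by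
      intro i
      have h1 : ∑ w, S i w * x w = S i r * x r + ∑ w ∈ Finset.univ.erase r, S i w * x w :=
        (Finset.add_sum_erase _ _ (Finset.mem_univ r)).symm
      have h2 : ∑ w ∈ Finset.univ.erase r, S i w = 1 - S i r := by
        have := Finset.add_sum_erase Finset.univ (fun w => S i w) (Finset.mem_univ r)
        rw [hSr i] at this; linarith
      have h3 : ∑ w ∈ Finset.univ.erase r, S i w * x w ≤ (1 - S i r) * M := by
        rw [← h2, Finset.sum_mul]
        exact Finset.sum_le_sum fun w _ =>
          mul_le_mul_of_nonneg_left (Finset.le_sup' x (Finset.mem_univ w)) (hSn i w)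
      have h4 : δ ≤ S i r := hδ i
      nlinarith [mul_nonneg (sub_nonneg.2 h4) (sub_nonneg.2 hxrM)]
    have hlower : ∀ i, δ * x r + (1 - δ) * m ≤ ∑ w, S i w * x w := by
      intro i
      have h1 : ∑ w, S i w * x w = S i r * x r + ∑ w ∈ Finset.univ.erase r, S i w * x w :=
        (Finset.add_sum_erase _ _ (Finset.mem_univ r)).symm
      have h2 : ∑ w ∈ Finset.univ.erase r, S i w = 1 - S i r := by
        have := Finset.add_sum_erase Finset.univ (fun w => S i w) (Finset.mem_univ r)
        rw [hSr i] at this; linarith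
      have h3 : (1 - S i r) * m ≤ ∑ w ∈ Finset.univ.erase r, S i w * x w := by
        rw [← h2, Finset.sum_mul]
        exact Finset.sum_le_sum fun w _ =>
          mul_le_mul_of_nonneg_left (Finset.inf'_le x (Finset.mem_univ w)) (hSn i w)
      have h4 : δ ≤ S i r := hδ i
      nlinarith [mul_nonneg (sub_nonneg.2 h4) (sub_nonneg.2 hmxr)]
    have hsup : Finset.univ.sup' hne (fun i => ∑ w, S i w * x w) ≤ δ * x r + (1 - δ) * M :=
      Finset.sup'_le _ _ fun i _ => hupper i
    have hinf : δ * x r + (1 - δ) * m ≤ Finset.univ.inf' hne (fun i => ∑ w, S i w * x w) :=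
      Finset.le_inf' _ _ fun i _ => hlower i
    linarith
  -- positivity of column r propagates up
  have hstep_pos : ∀ ℓ (v : Fin n), 0 < (A ^ ℓ) v r → 0 < (A ^ (ℓ + 1)) v r := by
    intro ℓ v h
    rw [pow_succ, Matrix.mul_apply]
    exact Finset.sum_pos' (fun w _ => mul_nonneg (hPnn ℓ v w) (hnonneg w r))
      ⟨r, Finset.mem_univ r, mul_pos h hself⟩
  have hmono_pos : ∀ (v : Fin n) (ℓ k : ℕ), ℓ ≤ k → 0 < (A ^ ℓ) v r → 0 < (A ^ k) v r := by
    intro v ℓ k hlk h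
    induction k, hlk using Nat.le_induction with
    | base => exact h
    | succ k hk ih => exact hstep_pos k v ih
  -- every v has some power with positive (v, r) entry
  have hpos : ∀ v : Fin n, ∃ ℓ, 0 < (A ^ ℓ) v r := by
    intro v
    induction hreach v with
    | refl => exact ⟨0, by simp⟩
    | tail hab hbc ih =>
      obtain ⟨ℓ, hℓ⟩ := ih
      refine ⟨ℓ + 1, ?_⟩
      rw [pow_succ', Matrix.mul_apply]
      exact Finset.sum_pos' (fun w _ => mul_nonneg (hnonneg _ w) (hPnn ℓ w r))
        ⟨_, Finset.mem_univ _, mul_pos hbc hℓ⟩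
  choose ℓf hℓf using hpos
  set m : ℕ := Finset.univ.sup ℓf + 1 with hmdef
  have hm1 : 1 ≤ m := Nat.le_add_left 1 _
  have hBpos : ∀ v, 0 < (A ^ m) v r := fun v =>
    hmono_pos v (ℓf v) m (le_trans (Finset.le_sup (Finset.mem_univ v)) (Nat.le_succ _)) (hℓf v)
  set δ : ℝ := Finset.univ.inf' hne (fun v => (A ^ m) v r) with hδdef
  have hδpos : 0 < δ := (Finset.lt_inf'_iff hne).2 fun v _ => hBpos v
  have hδle : ∀ i, δ ≤ (A ^ m) i r := fun i => Finset.inf'_le _ (Finset.mem_univ i)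
  have hδ1 : δ ≤ 1 := by
    have h1 : (A ^ m) r r ≤ ∑ w, (A ^ m) r w :=
      Finset.single_le_sum (fun w _ => hPnn m r w) (Finset.mem_univ r)
    have := hδle r
    rw [hProw m r] at h1
    linarith
  -- main construction
  refine ⟨fun j => ⨅ k, Finset.univ.sup' hne (fun i => (A ^ k) i j), ?_⟩
  intro i j
  set x : ℕ → Fin n → ℝ := fun k i => (A ^ k) i j with hx
  set Ms : ℕ → ℝ := fun k => Finset.univ.sup' hne (x k) with hMs
  set ms : ℕ → ℝ := fun k => Finset.univ.inf' hne (x k) with hms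
  have hstep : ∀ k i, x (k + 1) i = ∑ w, A i w * x k w := by
    intro k i; simp only [hx, pow_succ', Matrix.mul_apply]
  have hstepm : ∀ k i, x (k + m) i = ∑ w, (A ^ m) i w * x k w := by
    intro k i
    simp only [hx, add_comm k m, pow_add, Matrix.mul_apply]
  have hmsMs : ∀ k, ms k ≤ Ms k :=
    fun k => le_trans (Finset.inf'_le (x k) (Finset.mem_univ r)) (Finset.le_sup' (x k) (Finset.mem_univ r))
  have hManti : Antitone Ms := by
    apply antitone_nat_of_succ_le
    intro k
    apply Finset.sup'_le
    intro i _
    rw [hstep k i]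
    exact hub A hnonneg hrow (x k) i
  have hmmono : Monotone ms := by
    apply monotone_nat_of_le_succ
    intro k
    apply Finset.le_inf'
    intro i _
    rw [hstep k i]
    exact hlb A hnonneg hrow (x k) i
  have hoscanti : Antitone (fun k => Ms k - ms k) := fun a b hab => by
    have := hManti hab; have := hmmono hab; simp only; linarith
  have hcontr : ∀ k, Ms (k + m) - ms (k + m) ≤ (1 - δ) * (Ms k - ms k) := by
    intro k
    have hxeq : x (k + m) = fun i => ∑ w, (A ^ m) i w * x k w := funext (hstepm k)
    have := hcon (A ^ m) (hPnn m) (hProw m) δ hδle (x k)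
    simp only [hMs, hms, hxeq]
    exact this
  have hgeo : ∀ q, Ms (m * q) - ms (m * q) ≤ (1 - δ) ^ q * (Ms 0 - ms 0) := by
    intro q
    induction q with
    | zero => simp
    | succ q ih =>
      have h1 : m * (q + 1) = m * q + m := by ring
      rw [h1]
      calc Ms (m * q + m) - ms (m * q + m) ≤ (1 - δ) * (Ms (m * q) - ms (m * q)) := hcontr _
        _ ≤ (1 - δ) * ((1 - δ) ^ q * (Ms 0 - ms 0)) := by
            apply mul_le_mul_of_nonneg_left ih (by linarith)
        _ = (1 - δ) ^ (q + 1) * (Ms 0 - ms 0) := by ring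
  have hbound : ∀ k, Ms k - ms k ≤ (1 - δ) ^ (k / m) * (Ms 0 - ms 0) := by
    intro k
    calc Ms k - ms k ≤ Ms (m * (k / m)) - ms (m * (k / m)) := hoscanti (Nat.mul_div_le k m)
      _ ≤ _ := hgeo _
  -- (1-δ)^(k/m) → 0
  have hdiv : Tendsto (fun k : ℕ => k / m) atTop atTop := by
    apply tendsto_atTop_atTop.2
    intro b
    exact ⟨m * b, fun k hk => (Nat.le_div_iff_mul_le (by omega)).2 (by rw [mul_comm]; exact hk)⟩
  have hpow0 : Tendsto (fun k : ℕ => (1 - δ) ^ (k / m) * (Ms 0 - ms 0)) atTop (𝓝 0) := by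
    have h1 : Tendsto (fun q : ℕ => (1 - δ) ^ q) atTop (𝓝 0) :=
      tendsto_pow_atTop_nhds_zero_of_abs_lt_one (by rw [abs_of_nonneg (by linarith)]; linarith)
    have := (h1.comp hdiv).mul_const (Ms 0 - ms 0)
    simpa using this
  have hosc0 : Tendsto (fun k => Ms k - ms k) atTop (𝓝 0) := by
    apply tendsto_of_tendsto_of_tendsto_of_le_of_le tendsto_const_nhds hpow0
    · intro k; simp only; linarith [hmsMs k]
    · intro k; exact hbound k
  -- M converges to the infimum
  have hMconv : Tendsto Ms atTop (𝓝 (⨅ k, Ms k)) := by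
    apply tendsto_atTop_ciInf hManti
    refine ⟨ms 0, ?_⟩
    rintro y ⟨k, rfl⟩
    exact le_trans (hmmono (Nat.zero_le k)) (hmsMs k)
  have hmconv : Tendsto ms atTop (𝓝 (⨅ k, Ms k)) := by
    have := hMconv.sub hosc0
    simp only [sub_zero] at this
    have heq : (fun k => Ms k - (Ms k - ms k)) = ms := by funext k; ring
    rwa [heq] at this
  -- squeeze
  have : Tendsto (fun k => x k i) atTop (𝓝 (⨅ k, Ms k)) := by
    apply tendsto_of_tendsto_of_tendsto_of_le_of_le hmconv hMconv
    · intro k; exact Finset.inf'_le (x k) (Finset.mem_univ i)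
    · intro k; exact Finset.le_sup' (x k) (Finset.mem_univ i)
  exact this
end

section
/- Let A be a stochastic n×n real matrix such that the digraph G(A) (edge from i to j iff A_{ji} > 0) contains a spanning tree whose root vertex r satisfies A_{rr} > 0 (every vertex is reachable from r). Then 1 is an eigenvalue of A of algebraic multiplicity one, and every other complex eigenvalue μ of A satisfies |μ| < 1. -/
open Polynomial Matrix Finset


lemma my_eval_charpoly {n : ℕ} (M : Matrix (Fin n) (Fin n) ℂ) (t : ℂ) :
    (M.charpoly).eval t = (t • (1 : Matrix (Fin n) (Fin n) ℂ) - M).det := by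
  rw [Matrix.charpoly, ← Polynomial.coe_evalRingHom, RingHom.map_det]
  congr 1
  ext i j
  rcases eq_or_ne i j with rfl | h
  · simp [charmatrix_apply_eq, Matrix.one_apply]
  · simp [charmatrix_apply_ne _ _ _ h, Matrix.one_apply_ne h]

lemma my_charpoly_shift {n : ℕ} (M : Matrix (Fin n) (Fin n) ℂ) (t : ℂ) :
    (M.charpoly).comp (X + C t) = (M - t • 1).charpoly := by
  have h : ∀ p : ℂ[X], p.comp (X + C t) = ((aeval (X + C t) : ℂ[X] →ₐ[ℂ] ℂ[X]) : ℂ[X] →+* ℂ[X]) p := by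
    intro p; simp [aeval_def, eval₂_def, Polynomial.comp]
  rw [Matrix.charpoly, h, RingHom.map_det, Matrix.charpoly]
  congr 1
  ext i j
  rcases eq_or_ne i j with rfl | h
  · simp [charmatrix_apply_eq, Matrix.one_apply]
    ring
  · simp [charmatrix_apply_ne _ _ _ h, Matrix.one_apply_ne h]


lemma my_charpoly_toLin' {n : ℕ} (M : Matrix (Fin n) (Fin n) ℂ) :
    (Matrix.toLin' M : Module.End ℂ (Fin n → ℂ)).charpoly = M.charpoly := by
  conv_rhs => rw [← LinearMap.toMatrix'_toLin' M]
  rw [← LinearMap.toMatrix_eq_toMatrix',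
    LinearMap.charpoly_toMatrix (Matrix.toLin' M) (Pi.basisFun ℂ (Fin n))]

section
variable {n : ℕ} {A : Matrix (Fin n) (Fin n) ℝ}

lemma stoch_bound (hnonneg : ∀ i j, 0 ≤ A i j) (hrow : ∀ i, ∑ j, A i j = 1)
    (x : Fin n → ℂ) (K : ℝ) (hK : ∀ j, ‖x j‖ ≤ K) (i : Fin n) :
    ‖(A.map Complex.ofReal).mulVec x i‖ ≤ K := by
  have h1 : (A.map Complex.ofReal).mulVec x i = ∑ j, (A i j : ℂ) * x j := by
    simp [Matrix.mulVec, dotProduct, Matrix.map_apply]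
  rw [h1]
  calc ‖∑ j, (A i j : ℂ) * x j‖ ≤ ∑ j, ‖(A i j : ℂ) * x j‖ :=
        norm_sum_le _ _
    _ = ∑ j, A i j * ‖x j‖ := by
        refine Finset.sum_congr rfl fun j _ => ?_
        rw [norm_mul, Complex.norm_of_nonneg (hnonneg i j)]
    _ ≤ ∑ j, A i j * K := by
        refine Finset.sum_le_sum fun j _ => ?_
        exact mul_le_mul_of_nonneg_left (hK j) (hnonneg i j)
    _ = K := by rw [← Finset.sum_mul, hrow i, one_mul]

lemma stoch_eq_prop (hnonneg : ∀ i j, 0 ≤ A i j) (hrow : ∀ i, ∑ j, A i j = 1)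
    (μ : ℂ) (x : Fin n → ℂ) (K : ℝ) (hμ : ‖μ‖ = 1)
    (hx : (A.map Complex.ofReal).mulVec x = μ • x)
    (hK : ∀ j, ‖x j‖ ≤ K) (i : Fin n) (hi : ‖x i‖ = K)
    (j : Fin n) (hij : 0 < A i j) : x j = μ * x i := by
  have hK0 : 0 ≤ K := hi ▸ norm_nonneg _
  set c : ℂ := (starRingEnd ℂ) (μ * x i) with hc
  have habsz : ‖μ * x i‖ = K := by rw [norm_mul, hμ, hi, one_mul]
  have hmv : ∑ k, (A i k : ℂ) * x k = μ * x i := by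
    have := congrFun hx i
    simpa [Matrix.mulVec, dotProduct, Matrix.map_apply, Pi.smul_apply,
      smul_eq_mul] using this
  have hsum0 : ∑ k, A i k * (K ^ 2 - (c * x k).re) = 0 := by
    have h1 : ∑ k, A i k * (c * x k).re = K ^ 2 := by
      have e1 : ∑ k, A i k * (c * x k).re = ∑ k, (c * ((A i k : ℂ) * x k)).re := by
        refine Finset.sum_congr rfl fun k _ => ?_
        rw [show c * ((A i k : ℂ) * x k) = (A i k : ℂ) * (c * x k) by ring,
          Complex.re_ofReal_mul]
      rw [e1, ← Complex.re_sum, ← Finset.mul_sum, hmv, hc,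
        ← Complex.normSq_eq_conj_mul_self, ← Complex.sq_norm, habsz,
        Complex.ofReal_re]
    have h2 : ∑ k, A i k * K ^ 2 = K ^ 2 := by rw [← Finset.sum_mul, hrow i, one_mul]
    simp only [mul_sub]
    rw [Finset.sum_sub_distrib, h1, h2, sub_self]
  have hterm : ∀ k ∈ Finset.univ, 0 ≤ A i k * (K ^ 2 - (c * x k).re) := by
    intro k _
    refine mul_nonneg (hnonneg i k) (sub_nonneg.2 ?_)
    calc (c * x k).re ≤ ‖c * x k‖ := Complex.re_le_norm _
      _ = K * ‖x k‖ := by rw [norm_mul, hc, Complex.norm_conj, habsz]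
      _ ≤ K * K := mul_le_mul_of_nonneg_left (hK k) hK0
      _ = K ^ 2 := (sq K).symm
  have hzero := (Finset.sum_eq_zero_iff_of_nonneg hterm).1 hsum0 j (Finset.mem_univ j)
  have hre : (c * x j).re = K ^ 2 := by
    rcases mul_eq_zero.1 hzero with h | h
    · exact absurd h (ne_of_gt hij)
    · linarith [sub_eq_zero.1 h]
  have hns : Complex.normSq (μ * x i - x j) ≤ 0 := by
    have hrw : Complex.normSq (μ * x i - x j)
        = Complex.normSq (μ * x i) + Complex.normSq (x j) - 2 * (c * x j).re := by
      rw [Complex.normSq_sub]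
      congr 2
      rw [hc, ← Complex.conj_re ((μ * x i) * (starRingEnd ℂ) (x j))]
      simp [mul_comm]
    have h1 : Complex.normSq (μ * x i) = K ^ 2 := by
      rw [← Complex.sq_norm, habsz]
    have h2 : Complex.normSq (x j) ≤ K ^ 2 := by
      rw [← Complex.sq_norm]
      exact pow_le_pow_left₀ (norm_nonneg _) (hK j) 2
    rw [hrw, h1, hre]
    linarith
  have h0 := Complex.normSq_eq_zero.1 (le_antisymm hns (Complex.normSq_nonneg _))
  exact (sub_eq_zero.1 h0).symm

/-- propagation to the root -/
lemma stoch_root_abs (hnonneg : ∀ i j, 0 ≤ A i j) (hrow : ∀ i, ∑ j, A i j = 1)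
    (r : Fin n)
    (μ : ℂ) (x : Fin n → ℂ) (K : ℝ) (hμ : ‖μ‖ = 1)
    (hx : (A.map Complex.ofReal).mulVec x = μ • x)
    (hK : ∀ j, ‖x j‖ ≤ K)
    (v : Fin n) (hreachv : Relation.ReflTransGen (fun i j : Fin n => 0 < A j i) r v)
    (hv : ‖x v‖ = K) : ‖x r‖ = K := by
  induction hreachv with
  | refl => exact hv
  | @tail b c hb e ih =>
      have hxb : x b = μ * x c := stoch_eq_prop hnonneg hrow μ x K hμ hx hK c hv b e
      apply ih
      rw [hxb, norm_mul, hμ, one_mul, hv]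

lemma eigen_mu_eq_one (hnonneg : ∀ i j, 0 ≤ A i j) (hrow : ∀ i, ∑ j, A i j = 1)
    (r : Fin n) (hself : 0 < A r r)
    (hreach : ∀ v : Fin n, Relation.ReflTransGen (fun i j : Fin n => 0 < A j i) r v)
    (μ : ℂ) (x : Fin n → ℂ) (hμ : ‖μ‖ = 1)
    (hx : (A.map Complex.ofReal).mulVec x = μ • x) (hx0 : x ≠ 0) : μ = 1 := by
  obtain ⟨v, -, hv⟩ := Finset.exists_max_image Finset.univ
    (fun i => ‖x i‖) ⟨r, Finset.mem_univ r⟩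
  set K := ‖x v‖ with hKdef
  have hK : ∀ j, ‖x j‖ ≤ K := fun j => hv j (Finset.mem_univ j)
  have hKpos : 0 < K := by
    obtain ⟨k, hk⟩ := Function.ne_iff.1 hx0
    calc (0:ℝ) < ‖x k‖ := by
          simpa using norm_pos_iff.2 hk
      _ ≤ K := hK k
  have hr : ‖x r‖ = K :=
    stoch_root_abs hnonneg hrow r μ x K hμ hx hK v (hreach v) rfl
  have hrr : x r = μ * x r := stoch_eq_prop hnonneg hrow μ x K hμ hx hK r hr r hself
  have hxr : x r ≠ 0 := by
    intro h; rw [h] at hr; simp at hr; rw [← hr] at hKpos; exact lt_irrefl 0 hKpos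
  have h2 : μ * x r = 1 * x r := by rw [one_mul, ← hrr]
  exact mul_right_cancel₀ hxr h2

/-- constant vectors are fixed -/
lemma stoch_const (hrow : ∀ i, ∑ j, A i j = 1) (c : ℂ) :
    (A.map Complex.ofReal).mulVec (fun _ => c) = fun _ => c := by
  funext i
  have : ∀ j, (A.map Complex.ofReal) i j = ((A i j : ℝ) : ℂ) := fun j => rfl
  simp only [Matrix.mulVec, dotProduct, this]
  rw [← Finset.sum_mul, ← Complex.ofReal_sum, hrow i]
  simp

lemma stoch_fixed_const (hnonneg : ∀ i j, 0 ≤ A i j) (hrow : ∀ i, ∑ j, A i j = 1)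
    (r : Fin n)
    (hreach : ∀ v : Fin n, Relation.ReflTransGen (fun i j : Fin n => 0 < A j i) r v)
    (x : Fin n → ℂ) (hx : (A.map Complex.ofReal).mulVec x = x) :
    x = fun _ => x r := by
  by_contra hne
  set z : Fin n → ℂ := fun i => x i - x r with hzdef
  have hz0 : z ≠ 0 := by
    intro h
    apply hne
    funext i
    have := congrFun h i
    simpa [hzdef, sub_eq_zero] using this
  have hz : (A.map Complex.ofReal).mulVec z = (1:ℂ) • z := by
    have : z = x - fun _ => x r := by funext i; simp [hzdef]
    rw [this, Matrix.mulVec_sub, hx, stoch_const hrow (x r), one_smul]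
  obtain ⟨v, -, hv⟩ := Finset.exists_max_image Finset.univ
    (fun i => ‖z i‖) ⟨r, Finset.mem_univ r⟩
  set K := ‖z v‖ with hKdef
  have hK : ∀ j, ‖z j‖ ≤ K := fun j => hv j (Finset.mem_univ j)
  have hKpos : 0 < K := by
    obtain ⟨k, hk⟩ := Function.ne_iff.1 hz0
    calc (0:ℝ) < ‖z k‖ := by simpa using norm_pos_iff.2 hk
      _ ≤ K := hK k
  have hr : ‖z r‖ = K :=
    stoch_root_abs hnonneg hrow r 1 z K (by simp) hz hK v (hreach v) rfl
  have : z r = 0 := by simp [hzdef]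
  rw [this] at hr
  simp at hr
  rw [← hr] at hKpos
  exact lt_irrefl 0 hKpos


lemma stoch_gen_step (hnonneg : ∀ i j, 0 ≤ A i j) (hrow : ∀ i, ∑ j, A i j = 1)
    (r : Fin n) (x : Fin n → ℂ) (c : ℂ)
    (hc : (A.map Complex.ofReal).mulVec x = x + c • (fun _ => (1:ℂ))) : c = 0 := by
  set B := A.map Complex.ofReal with hB
  obtain ⟨v, -, hv⟩ := Finset.exists_max_image Finset.univ
    (fun i => ‖x i‖) ⟨r, Finset.mem_univ r⟩
  set K := ‖x v‖ with hKdef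
  have hK : ∀ j, ‖x j‖ ≤ K := fun j => hv j (Finset.mem_univ j)
  have hpow : ∀ m : ℕ, (B ^ m).mulVec x = x + (m : ℂ) • c • (fun _ => (1:ℂ)) := by
    intro m
    induction m with
    | zero => simp
    | succ m ih =>
        rw [pow_succ', ← Matrix.mulVec_mulVec, ih, Matrix.mulVec_add, hc,
          Matrix.mulVec_smul, Matrix.mulVec_smul, stoch_const hrow 1]
        funext i
        simp only [Pi.add_apply, Pi.smul_apply, smul_eq_mul, mul_one]
        push_cast
        ring
  have hbound : ∀ (m : ℕ) (i : Fin n), ‖((B ^ m).mulVec x) i‖ ≤ K := by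
    intro m
    induction m with
    | zero => simpa using hK
    | succ m ih =>
        intro i
        rw [pow_succ', ← Matrix.mulVec_mulVec]
        exact stoch_bound hnonneg hrow _ K ih i
  by_contra hc0
  obtain ⟨m, hm⟩ := exists_nat_gt ((K + ‖x r‖) / ‖c‖)
  have h1 : ‖x r + (m : ℂ) * c‖ ≤ K := by
    have := hbound m r
    rw [hpow m] at this
    simpa [smul_eq_mul] using this
  have h2 : (m : ℝ) * ‖c‖ ≤ K + ‖x r‖ := by
    calc (m : ℝ) * ‖c‖ = ‖(m : ℂ) * c‖ := by
          rw [norm_mul, Complex.norm_natCast]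
      _ = ‖(x r + (m : ℂ) * c) - x r‖ := by ring_nf
      _ ≤ ‖x r + (m : ℂ) * c‖ + ‖x r‖ := by
          exact norm_sub_le _ _
      _ ≤ K + ‖x r‖ := by linarith
  have hcpos : 0 < ‖c‖ := norm_pos_iff.2 hc0
  rw [div_lt_iff₀ hcpos] at hm
  linarith


end

/-- If a stochastic matrix `A` has a digraph (edge from `i` to `j` iff `A j i > 0`)
containing a spanning tree whose root has a self-loop, then `1` is an eigenvalue of `A`
of algebraic multiplicity one and every other complex eigenvalue `μ` satisfies `|μ| < 1`. -/
theorem spanning_tree_selfloop_eigenvalues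
    (n : ℕ)
    (A : Matrix (Fin n) (Fin n) ℝ)
    (hnonneg : ∀ i j, 0 ≤ A i j)
    (hrow : ∀ i, ∑ j, A i j = 1)
    (r : Fin n) (hself : 0 < A r r)
    (hreach : ∀ v : Fin n, Relation.ReflTransGen (fun i j : Fin n => 0 < A j i) r v) :
    Polynomial.rootMultiplicity 1 (Matrix.charpoly (A.map Complex.ofReal)) = 1 ∧
    ∀ μ : ℂ, μ ≠ 1 → (Matrix.charpoly (A.map Complex.ofReal)).IsRoot μ →
      ‖μ‖ < 1 := by
  set B := A.map Complex.ofReal with hB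
  set ones : Fin n → ℂ := fun _ => 1 with hones
  have hones0 : ones ≠ 0 := by
    intro h
    have := congrFun h r
    simp [hones] at this
  set φ : Module.End ℂ (Fin n → ℂ) := Matrix.toLin' (B - 1) with hφ
  have hφapply : ∀ x, φ x = B.mulVec x - x := by
    intro x
    rw [hφ, Matrix.toLin'_apply, Matrix.sub_mulVec, Matrix.one_mulVec]
  -- kernel of φ is the span of the constant vector
  have hker : LinearMap.ker φ = Submodule.span ℂ {ones} := by
    apply le_antisymm
    · intro x hx
      rw [LinearMap.mem_ker, hφapply, sub_eq_zero] at hx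
      have := stoch_fixed_const hnonneg hrow r hreach x hx
      rw [Submodule.mem_span_singleton]
      exact ⟨x r, by rw [this]; funext i; simp [hones]⟩
    · rw [Submodule.span_le, Set.singleton_subset_iff]
      simp only [SetLike.mem_coe, LinearMap.mem_ker]
      rw [hφapply, sub_eq_zero, hones]
      exact stoch_const hrow 1
  -- kernel stabilization
  have hstep : ∀ x, φ (φ x) = 0 → φ x = 0 := by
    intro x hxx
    have hmem : φ x ∈ LinearMap.ker φ := hxx
    rw [hker, Submodule.mem_span_singleton] at hmem
    obtain ⟨c, hc⟩ := hmem
    have hc' : B.mulVec x = x + c • (fun _ => (1:ℂ)) := by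
      have := hc.symm
      rw [hφapply] at this
      rw [sub_eq_iff_eq_add] at this
      rw [this]
      funext i; simp [hones]; ring
    have := stoch_gen_step hnonneg hrow r x c hc'
    rw [← hc, this, zero_smul]
  have hind : ∀ (k : ℕ) (x : Fin n → ℂ), (φ ^ (k + 1)) x = 0 → φ x = 0 := by
    intro k
    induction k with
    | zero => intro x h; simpa using h
    | succ k ih =>
        intro x h
        apply hstep
        apply ih (φ x)
        rw [pow_succ, Module.End.mul_apply] at h
        exact h
  have hmax : φ.maxGenEigenspace 0 = LinearMap.ker φ := by
    ext x
    rw [Module.End.mem_maxGenEigenspace]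
    simp only [zero_smul, sub_zero, LinearMap.mem_ker]
    constructor
    · rintro ⟨k, hk⟩
      cases k with
      | zero =>
          simp only [pow_zero, Module.End.one_apply] at hk
          rw [hk]; simp
      | succ k => exact hind k x hk
    · intro h; exact ⟨1, by simpa using h⟩
  have hfin : Module.finrank ℂ (LinearMap.ker φ) = 1 := by
    rw [hker]
    exact finrank_span_singleton hones0
  constructor
  · rw [Polynomial.rootMultiplicity_eq_natTrailingDegree]
    rw [my_charpoly_shift B 1, one_smul, ← my_charpoly_toLin' (B - 1), ← hφ,
      ← LinearMap.finrank_maxGenEigenspace_zero_eq, hmax, hfin]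
  · intro μ hμne hroot
    have hdet : (μ • (1 : Matrix (Fin n) (Fin n) ℂ) - B).det = 0 := by
      rw [← my_eval_charpoly B μ]; exact hroot
    obtain ⟨v, hv0, hv⟩ := (Matrix.exists_mulVec_eq_zero_iff).2 hdet
    have hx : B.mulVec v = μ • v := by
      rw [Matrix.sub_mulVec, sub_eq_zero, Matrix.smul_mulVec, Matrix.one_mulVec] at hv
      exact hv.symm
    obtain ⟨w, -, hw⟩ := Finset.exists_max_image Finset.univ
      (fun i => ‖v i‖) ⟨r, Finset.mem_univ r⟩
    set K := ‖v w‖ with hKdef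
    have hK : ∀ j, ‖v j‖ ≤ K := fun j => hw j (Finset.mem_univ j)
    have hKpos : 0 < K := by
      obtain ⟨k, hk⟩ := Function.ne_iff.1 hv0
      calc (0:ℝ) < ‖v k‖ := by simpa using norm_pos_iff.2 hk
        _ ≤ K := hK k
    have hle : ‖μ‖ ≤ 1 := by
      have h1 : ‖(B.mulVec v) w‖ ≤ K := stoch_bound hnonneg hrow v K hK w
      rw [hx] at h1
      have h2 : ‖μ‖ * K ≤ K := by
        simpa [norm_mul, hKdef] using h1
      nlinarith
    rcases lt_or_eq_of_le hle with h | h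
    · exact h
    · exact absurd (eigen_mu_eq_one hnonneg hrow r hself hreach μ v h hx hv0) hμne
end

section
/- Let m ≥ 2, n ≥ 1, and let A_1, …, A_m be nonnegative n×n real matrices. Let M_0 be the mn×mn block matrix (blocks indexed by {0,…,m−1}) whose block row 0 has the n×n identity in block column 0, whose block row s (1 ≤ s ≤ m−1) has the identity in block column s−1, and all other blocks zero; let N be the mn×mn matrix whose block row 0 is (A_1, A_2, …, A_m) and all other block rows are zero; and for 1 ≤ i ≤ m−1 set M_i = M_0^i + N. If the digraph of the n×n matrix I + A_1 + ⋯ + A_m (the sum of the blocks in the first block row of M_i) contains a spanning tree, then the digraph of M_i contains a spanning tree whose root vertex has a self-loop, i.e., there exists a vertex u of {1,…,mn} with (M_i)_{uu} > 0 such that every vertex is reachable from u along edges of the digraph of M_i. -/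
/-- The `mn × mn` block matrix `M₀` (blocks indexed by `Fin m`): block row `0` has the
`n × n` identity in block column `0`, block row `s` (`1 ≤ s ≤ m - 1`) has the identity in
block column `s - 1`, and all other blocks are zero. -/
def blockM0 (m n : ℕ) : Matrix (Fin m × Fin n) (Fin m × Fin n) ℝ :=
  Matrix.of fun u v =>
    if u.2 = v.2 ∧ ((u.1.val = 0 ∧ v.1.val = 0) ∨ u.1.val = v.1.val + 1) then 1 else 0

/-- The `mn × mn` matrix `N` whose block row `0` is `(A_1, A_2, …, A_m)` and whose other
block rows are zero. -/
def blockN (m n : ℕ) (A : Fin m → Matrix (Fin n) (Fin n) ℝ) :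
    Matrix (Fin m × Fin n) (Fin m × Fin n) ℝ :=
  Matrix.of fun u v => if u.1.val = 0 then A v.1 u.2 v.2 else 0

lemma blockM0_pow_apply (m n : ℕ) (i : ℕ) (u v : Fin m × Fin n) :
    ((blockM0 m n) ^ i) u v =
      if u.2 = v.2 ∧ v.1.val = u.1.val - i then 1 else 0 := by
  induction i generalizing v with
  | zero =>
    rw [pow_zero, Matrix.one_apply]
    by_cases h : u = v
    · subst h; simp
    · rw [if_neg h, if_neg]
      rintro ⟨h2, h1⟩
      exact h (Prod.ext (Fin.ext (by omega)) h2)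
  | succ k ih =>
    rw [pow_succ, Matrix.mul_apply]
    by_cases h : u.2 = v.2 ∧ v.1.val = u.1.val - (k + 1)
    · rw [if_pos h]
      obtain ⟨h2, h1⟩ := h
      have hw : u.1.val - k < m := lt_of_le_of_lt (Nat.sub_le _ _) u.1.isLt
      rw [Finset.sum_eq_single (⟨⟨u.1.val - k, hw⟩, u.2⟩ : Fin m × Fin n)]
      · rw [ih, if_pos ⟨rfl, rfl⟩, one_mul]
        show (if u.2 = v.2 ∧ ((u.1.val - k = 0 ∧ v.1.val = 0) ∨ u.1.val - k = v.1.val + 1)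
            then (1:ℝ) else 0) = 1
        rw [if_pos ⟨h2, by omega⟩]
      · intro w _ hne
        rw [ih]
        by_cases hc : u.2 = w.2 ∧ w.1.val = u.1.val - k
        · exfalso
          apply hne
          rw [Prod.ext_iff]
          exact ⟨Fin.ext hc.2, hc.1.symm⟩
        · rw [if_neg hc, zero_mul]
      · intro habs; exact absurd (Finset.mem_univ _) habs
    · rw [if_neg h]
      apply Finset.sum_eq_zero
      intro w _
      rw [ih]
      by_cases hc : u.2 = w.2 ∧ w.1.val = u.1.val - k
      · rw [if_pos hc, one_mul]
        show (if w.2 = v.2 ∧ ((w.1.val = 0 ∧ v.1.val = 0) ∨ w.1.val = v.1.val + 1)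
            then (1:ℝ) else 0) = 0
        rw [if_neg]
        rintro ⟨e2, e1⟩
        exact h ⟨hc.1.trans e2, by omega⟩
      · rw [if_neg hc, zero_mul]

/-- If the digraph of `I + A_1 + ⋯ + A_m` contains a spanning tree, then the digraph of
`M_i = M₀^i + N` (for `1 ≤ i ≤ m - 1`) contains a spanning tree whose root vertex has a
self-loop. Edges: from `p` to `q` iff the `(q, p)` entry is positive. -/
theorem Mi_contains_spanning_tree_with_selfloop_root
    (m n : ℕ) (hm : 2 ≤ m) (hn : 1 ≤ n)
    (A : Fin m → Matrix (Fin n) (Fin n) ℝ)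
    (hA : ∀ s i j, 0 ≤ A s i j)
    (i : ℕ) (hi1 : 1 ≤ i) (him : i ≤ m - 1)
    (hspan : ∃ root : Fin n, ∀ v : Fin n,
      Relation.ReflTransGen
        (fun p q : Fin n => 0 < ((1 : Matrix (Fin n) (Fin n) ℝ) + ∑ s, A s) q p)
        root v) :
    ∃ u : Fin m × Fin n,
      0 < ((blockM0 m n) ^ i + blockN m n A) u u ∧
      ∀ v : Fin m × Fin n,
        Relation.ReflTransGen
          (fun p q : Fin m × Fin n => 0 < ((blockM0 m n) ^ i + blockN m n A) q p)
          u v := by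
  obtain ⟨root, hroot⟩ := hspan
  have hm0 : 0 < m := by omega
  set Mi := (blockM0 m n) ^ i + blockN m n A with hMi
  set R := fun p q : Fin m × Fin n => 0 < Mi q p with hR
  have hNnn : ∀ u v, 0 ≤ blockN m n A u v := by
    intro u v
    show (0:ℝ) ≤ if u.1.val = 0 then A v.1 u.2 v.2 else 0
    split
    · exact hA _ _ _
    · exact le_refl 0
  have hPnn : ∀ u v, 0 ≤ ((blockM0 m n) ^ i) u v := by
    intro u v
    rw [blockM0_pow_apply]
    split <;> norm_num
  -- one step along a blockM0^i edge
  have step1 : ∀ p q : Fin m × Fin n, q.2 = p.2 → p.1.val = q.1.val - i → R p q := by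
    intro p q h2 h1
    show 0 < ((blockM0 m n) ^ i) q p + blockN m n A q p
    have := hNnn q p
    rw [blockM0_pow_apply, if_pos ⟨h2, h1⟩]
    linarith
  -- one step along an N edge
  have step2 : ∀ (s : Fin m) (x y : Fin n), 0 < A s y x →
      R (s, x) (⟨0, hm0⟩, y) := by
    intro s x y hpos
    show 0 < ((blockM0 m n) ^ i) (⟨0, hm0⟩, y) (s, x) + blockN m n A (⟨0, hm0⟩, y) (s, x)
    have h1 := hPnn (⟨0, hm0⟩, y) (s, x)
    have h2 : blockN m n A (⟨0, hm0⟩, y) (s, x) = A s y x := by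
      show (if (0:ℕ) = 0 then A s y x else 0) = A s y x
      simp
    rw [h2]; linarith
  -- from (0,x) reach (s,x) for any s
  have reach0' : ∀ (k : ℕ) (hk : k < m) (x : Fin n),
      Relation.ReflTransGen R (⟨0, hm0⟩, x) (⟨k, hk⟩, x) := by
    intro k
    induction k using Nat.strong_induction_on with
    | _ k ih =>
      intro hk x
      by_cases hs : k ≤ i
      · exact Relation.ReflTransGen.single (step1 _ _ rfl (by simp; omega))
      · push_neg at hs
        have hlt : k - i < m := lt_of_le_of_lt (Nat.sub_le _ _) hk
        have hlt2 : k - i < k := by omega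
        have h1 := ih (k - i) hlt2 hlt x
        exact h1.trans (Relation.ReflTransGen.single (step1 _ _ rfl rfl))
  have reach0 : ∀ (s : Fin m) (x : Fin n),
      Relation.ReflTransGen R (⟨0, hm0⟩, x) (s, x) := by
    intro s x
    have := reach0' s.val s.isLt x
    simpa using this
  -- lift a small-graph edge
  have liftE : ∀ x y : Fin n,
      0 < ((1 : Matrix (Fin n) (Fin n) ℝ) + ∑ s, A s) y x →
      Relation.ReflTransGen R (⟨0, hm0⟩, x) (⟨0, hm0⟩, y) := by
    intro x y hxy
    by_cases hexy : y = x
    · subst hexy; exact Relation.ReflTransGen.refl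
    · have h1 : ((1 : Matrix (Fin n) (Fin n) ℝ) + ∑ s, A s) y x = ∑ s, A s y x := by
        simp [Matrix.add_apply, Matrix.one_apply, hexy, Matrix.sum_apply]
      rw [h1] at hxy
      have : ∃ s : Fin m, 0 < A s y x := by
        by_contra hcon
        push_neg at hcon
        have : ∑ s, A s y x ≤ 0 := Finset.sum_nonpos (fun s _ => hcon s)
        linarith
      obtain ⟨s, hs⟩ := this
      exact (reach0 s x).trans (Relation.ReflTransGen.single (step2 s x y hs))
  -- lift small-graph reachability
  have liftR : ∀ x y : Fin n,
      Relation.ReflTransGen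
        (fun p q : Fin n => 0 < ((1 : Matrix (Fin n) (Fin n) ℝ) + ∑ s, A s) q p) x y →
      Relation.ReflTransGen R (⟨0, hm0⟩, x) (⟨0, hm0⟩, y) := by
    intro x y h
    induction h with
    | refl => exact Relation.ReflTransGen.refl
    | tail _ hbc ih => exact ih.trans (liftE _ _ hbc)
  refine ⟨(⟨0, hm0⟩, root), ?_, ?_⟩
  · show 0 < ((blockM0 m n) ^ i) _ _ + blockN m n A _ _
    have := hNnn (⟨0, hm0⟩, root) (⟨0, hm0⟩, root)
    rw [blockM0_pow_apply, if_pos ⟨rfl, by simp⟩]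
    linarith
  · rintro ⟨t, y⟩
    exact (liftR root y (hroot y)).trans (reach0 t y)
end

section
/- Let m ≥ 2, n ≥ 1, ℓ ≥ 1, and reals 0 < τ̂_v ≤ τ̂. Let M_0 be the mn×mn block matrix whose block row 0 has the n×n identity in block column 0, whose block row s (1 ≤ s ≤ m−1) has the identity in block column s−1, and all other blocks zero. For i = 1, …, ℓ let D_i be an mn×mn matrix whose block row 0 consists of nonnegative n×n blocks (A_{i1}, …, A_{im}) and whose other block rows are zero, and let h_i ∈ (0, τ̂]. Let H ⊆ {1,…,ℓ} be such that h_s ≥ τ̂_v for all s ∈ H. Then, with factors ordered so that the i = 1 factor is applied first (rightmost), the product (e^{−h_ℓ} M_0 + (1 − e^{−h_ℓ}) D_ℓ) ⋯ (e^{−h_1} M_0 + (1 − e^{−h_1}) D_1) is entrywise ≥ min{ e^{−ℓτ̂}, e^{−(ℓ−1)τ̂}(1 − e^{−τ̂_v}) } · ( M_0^ℓ + Σ_{i∈H} D_i M_0^{i−1} ). -/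
section helpers
variable {m n : ℕ}

lemma blockM0_nonneg (u v : Fin m × Fin n) : 0 ≤ blockM0 m n u v := by
  unfold blockM0; simp only [Matrix.of_apply]; split <;> norm_num

lemma entry_mul_nonneg {A B : Matrix (Fin m × Fin n) (Fin m × Fin n) ℝ}
    (hA : ∀ u v, 0 ≤ A u v) (hB : ∀ u v, 0 ≤ B u v) :
    ∀ u v, 0 ≤ (A * B) u v := by
  intro u v
  rw [Matrix.mul_apply]
  exact Finset.sum_nonneg fun w _ => mul_nonneg (hA u w) (hB w v)

lemma entry_pow_nonneg (p : ℕ) : ∀ u v : Fin m × Fin n, 0 ≤ ((blockM0 m n) ^ p) u v := by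
  induction p with
  | zero =>
      intro u v
      rw [pow_zero, Matrix.one_apply]
      split <;> norm_num
  | succ p ih =>
      rw [pow_succ]
      exact entry_mul_nonneg ih blockM0_nonneg

lemma blockM0_row0 (u w : Fin m × Fin n) (hu : u.1.val = 0) :
    blockM0 m n u w = if w = u then 1 else 0 := by
  unfold blockM0; simp only [Matrix.of_apply]
  have : (u.2 = w.2 ∧ ((u.1.val = 0 ∧ w.1.val = 0) ∨ u.1.val = w.1.val + 1)) ↔ w = u := by
    constructor
    · rintro ⟨h2, h1⟩
      have hw1 : w.1.val = u.1.val := by omega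
      exact Prod.ext (Fin.ext hw1) h2.symm
    · rintro rfl; exact ⟨rfl, Or.inl ⟨hu, hu⟩⟩
  simp [this]

lemma blockM0_pow_row0 (p : ℕ) (u : Fin m × Fin n) (hu : u.1.val = 0) (v : Fin m × Fin n) :
    ((blockM0 m n) ^ p) u v = if v = u then 1 else 0 := by
  induction p with
  | zero => rw [pow_zero, Matrix.one_apply]; simp [eq_comm]
  | succ p ih =>
      rw [pow_succ', Matrix.mul_apply]
      rw [Finset.sum_congr rfl (fun w _ => by rw [blockM0_row0 u w hu])]
      simp only [ite_mul, one_mul, zero_mul]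
      rw [Finset.sum_ite_eq' Finset.univ u fun w => ((blockM0 m n) ^ p) w v]
      simp [ih]

lemma row0_dominated {X : Matrix (Fin m × Fin n) (Fin m × Fin n) ℝ}
    (hX0 : ∀ u v : Fin m × Fin n, u.1.val ≠ 0 → X u v = 0)
    (hXnn : ∀ u v, 0 ≤ X u v) (p : ℕ) (u v : Fin m × Fin n) :
    X u v ≤ ((blockM0 m n) ^ p * X) u v := by
  by_cases hu : u.1.val = 0
  · rw [Matrix.mul_apply]
    rw [Finset.sum_congr rfl (fun w _ => by rw [blockM0_pow_row0 p u hu w])]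
    simp only [ite_mul, one_mul, zero_mul]
    rw [Finset.sum_ite_eq' Finset.univ u fun w => X w v]
    simp
  · rw [hX0 u v hu]
    exact entry_mul_nonneg (entry_pow_nonneg p) hXnn u v

lemma entry_mul_le {A B C : Matrix (Fin m × Fin n) (Fin m × Fin n) ℝ}
    (hA : ∀ u v, 0 ≤ A u v) (hBC : ∀ u v, B u v ≤ C u v) :
    ∀ u v, (A * B) u v ≤ (A * C) u v := by
  intro u v
  rw [Matrix.mul_apply, Matrix.mul_apply]
  exact Finset.sum_le_sum fun w _ => mul_le_mul_of_nonneg_left (hBC w v) (hA u w)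

end helpers

private lemma aux_key (m n ℓ : ℕ)
    (D : ℕ → Matrix (Fin m × Fin n) (Fin m × Fin n) ℝ)
    (hDnonneg : ∀ i ∈ Finset.Icc 1 ℓ, ∀ u v : Fin m × Fin n, 0 ≤ D i u v)
    (h : ℕ → ℝ)
    (hh : ∀ i ∈ Finset.Icc 1 ℓ, 0 < h i)
    (H : Finset ℕ) (hH : H ⊆ Finset.Icc 1 ℓ)
    (P : ℕ → Matrix (Fin m × Fin n) (Fin m × Fin n) ℝ)
    (hP0 : P 0 = 1)
    (hPrec : ∀ i < ℓ, P (i + 1) =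
      (Real.exp (-h (i + 1)) • blockM0 m n
        + (1 - Real.exp (-h (i + 1))) • D (i + 1)) * P i) :
    ∀ k, k ≤ ℓ → ∀ u v : Fin m × Fin n,
      ((∏ j ∈ Finset.Icc 1 k, Real.exp (-h j)) • (blockM0 m n) ^ k
        + ∑ i ∈ H.filter (· ≤ k),
            ((∏ j ∈ (Finset.Icc 1 k).erase i, Real.exp (-h j)) * (1 - Real.exp (-h i))) •
              ((blockM0 m n) ^ (k - i) * (D i * (blockM0 m n) ^ (i - 1)))) u v
      ≤ P k u v := by
  intro k
  induction k with
  | zero =>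
      intro _ u v
      have hfil : H.filter (· ≤ 0) = ∅ := by
        rw [Finset.filter_eq_empty_iff]
        intro i hi
        have := (Finset.mem_Icc.mp (hH hi)).1
        omega
      rw [hfil]
      simp [hP0]
  | succ k ih =>
      intro hk u v
      have hk' : k ≤ ℓ := by omega
      have hkIcc : k + 1 ∈ Finset.Icc 1 ℓ := Finset.mem_Icc.mpr ⟨by omega, hk⟩
      have hEpos : (0:ℝ) < Real.exp (-h (k+1)) := Real.exp_pos _
      have h1e : (0:ℝ) ≤ 1 - Real.exp (-h (k+1)) := by
        have h1 := hh _ hkIcc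
        have : Real.exp (-h (k+1)) ≤ 1 := Real.exp_le_one_iff.mpr (by linarith)
        linarith
      set pk := ∏ j ∈ Finset.Icc 1 k, Real.exp (-h j) with hpk
      have hpknn : 0 ≤ pk := Finset.prod_nonneg fun j _ => (Real.exp_pos _).le
      set S := ∑ i ∈ H.filter (· ≤ k),
          ((∏ j ∈ (Finset.Icc 1 k).erase i, Real.exp (-h j)) * (1 - Real.exp (-h i))) •
            ((blockM0 m n) ^ (k - i) * (D i * (blockM0 m n) ^ (i - 1))) with hS
      set Lk := pk • (blockM0 m n) ^ k + S with hLk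
      -- nonnegativity of S entrywise
      have hSnn : ∀ u v, 0 ≤ S u v := by
        intro u v
        rw [hS, Matrix.sum_apply]
        refine Finset.sum_nonneg fun i hi => ?_
        have hiH : i ∈ H := (Finset.mem_filter.mp hi).1
        have hiIcc := hH hiH
        have hile1 : Real.exp (-h i) ≤ 1 :=
          Real.exp_le_one_iff.mpr (by linarith [hh i hiIcc])
        rw [Matrix.smul_apply, smul_eq_mul]
        refine mul_nonneg (mul_nonneg (Finset.prod_nonneg fun j _ => (Real.exp_pos _).le)
          (by linarith)) ?_
        exact entry_mul_nonneg (entry_pow_nonneg _)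
          (entry_mul_nonneg (hDnonneg i hiIcc) (entry_pow_nonneg _)) u v
      -- rewrite P (k+1)
      rw [hPrec k (by omega)]
      set F := Real.exp (-h (k+1)) • blockM0 m n + (1 - Real.exp (-h (k+1))) • D (k+1) with hF
      have hFnn : ∀ u v, 0 ≤ F u v := by
        intro u v
        rw [hF, Matrix.add_apply, Matrix.smul_apply, Matrix.smul_apply, smul_eq_mul, smul_eq_mul]
        exact add_nonneg (mul_nonneg hEpos.le (blockM0_nonneg u v))
          (mul_nonneg h1e (hDnonneg _ hkIcc u v))
      have hstep : (F * Lk) u v ≤ (F * P k) u v := entry_mul_le hFnn (ih hk') u v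
      refine le_trans ?_ hstep
      -- expansion of M * Lk
      have hML : blockM0 m n * Lk
          = pk • (blockM0 m n) ^ (k+1)
            + ∑ i ∈ H.filter (· ≤ k),
                ((∏ j ∈ (Finset.Icc 1 k).erase i, Real.exp (-h j)) * (1 - Real.exp (-h i))) •
                  ((blockM0 m n) ^ (k + 1 - i) * (D i * (blockM0 m n) ^ (i - 1))) := by
        rw [hLk, hS, Matrix.mul_add, Matrix.mul_smul, ← pow_succ', Matrix.mul_sum]
        congr 1
        refine Finset.sum_congr rfl fun i hi => ?_
        have hile : i ≤ k := by simpa using (Finset.mem_filter.mp hi).2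
        rw [Matrix.mul_smul, ← Matrix.mul_assoc, ← pow_succ',
          show k - i + 1 = k + 1 - i from by omega]
      -- expansion of D (k+1) * Lk
      have hDLk : ∀ u v, pk * (D (k+1) * (blockM0 m n) ^ k) u v ≤ (D (k+1) * Lk) u v := by
        intro u v
        rw [hLk, Matrix.mul_add, Matrix.mul_smul, Matrix.add_apply, Matrix.smul_apply,
          smul_eq_mul]
        have := entry_mul_nonneg (hDnonneg _ hkIcc) hSnn u v
        linarith
      have hexp : F * Lk = Real.exp (-h (k+1)) • (blockM0 m n * Lk)
          + (1 - Real.exp (-h (k+1))) • (D (k+1) * Lk) := by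
        rw [hF, Matrix.add_mul, smul_mul_assoc, smul_mul_assoc]
      -- rewrite the LHS at k+1
      rw [Finset.prod_Icc_succ_top (by omega : 1 ≤ k + 1)]
      by_cases hmem : k + 1 ∈ H
      · have hfil : H.filter (· ≤ k + 1) = insert (k+1) (H.filter (· ≤ k)) := by
          ext i
          simp only [Finset.mem_filter, Finset.mem_insert]
          constructor
          · rintro ⟨hiH, hile⟩
            rcases Nat.lt_or_ge i (k+1) with hlt | hge
            · exact Or.inr ⟨hiH, by omega⟩
            · exact Or.inl (by omega)
          · rintro (rfl | ⟨hiH, hile⟩)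
            · exact ⟨hmem, le_refl _⟩
            · exact ⟨hiH, by omega⟩
        have hnotmem : k + 1 ∉ H.filter (· ≤ k) := by
          simp [Finset.mem_filter]
        rw [hfil, Finset.sum_insert hnotmem]
        have herase1 : (Finset.Icc 1 (k+1)).erase (k+1) = Finset.Icc 1 k := by
          rw [Finset.Icc_erase_right, Finset.Ico_add_one_right_eq_Icc]
        have herase : ∀ i ∈ H.filter (· ≤ k),
            (Finset.Icc 1 (k+1)).erase i = insert (k+1) ((Finset.Icc 1 k).erase i) := by
          intro i hi
          have hile : i ≤ k := by simpa using (Finset.mem_filter.mp hi).2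
          ext j
          simp only [Finset.mem_erase, Finset.mem_Icc, Finset.mem_insert]
          omega
        have hsum_eq : ∑ i ∈ H.filter (· ≤ k),
            ((∏ j ∈ (Finset.Icc 1 (k+1)).erase i, Real.exp (-h j)) * (1 - Real.exp (-h i))) •
              ((blockM0 m n) ^ (k + 1 - i) * (D i * (blockM0 m n) ^ (i - 1)))
            = Real.exp (-h (k+1)) • ∑ i ∈ H.filter (· ≤ k),
                ((∏ j ∈ (Finset.Icc 1 k).erase i, Real.exp (-h j)) * (1 - Real.exp (-h i))) •
                  ((blockM0 m n) ^ (k + 1 - i) * (D i * (blockM0 m n) ^ (i - 1))) := by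
          rw [Finset.smul_sum]
          refine Finset.sum_congr rfl fun i hi => ?_
          rw [herase i hi, Finset.prod_insert (by
            intro hc
            have := (Finset.mem_erase.mp hc).2
            have := (Finset.mem_Icc.mp this).2
            omega), smul_smul]
          ring_nf
        rw [hsum_eq, herase1]
        simp only [Nat.sub_self, Nat.add_sub_cancel, pow_zero, Matrix.one_mul]
        -- now compare entrywise
        rw [hexp, hML]
        simp only [Matrix.add_apply, Matrix.smul_apply, smul_eq_mul]
        have h2 := mul_le_mul_of_nonneg_left (hDLk u v) h1e
        have hk1 : k + 1 - 1 = k := by omega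
        nlinarith [h2]
      · have hfil : H.filter (· ≤ k + 1) = H.filter (· ≤ k) := by
          ext i
          simp only [Finset.mem_filter]
          constructor
          · rintro ⟨hiH, hile⟩
            refine ⟨hiH, ?_⟩
            rcases Nat.lt_or_ge i (k+1) with hlt | hge
            · omega
            · exact absurd (by omega : i = k + 1) (fun hc => hmem (hc ▸ hiH))
          · rintro ⟨hiH, hile⟩; exact ⟨hiH, by omega⟩
        rw [hfil]
        have herase : ∀ i ∈ H.filter (· ≤ k),
            (Finset.Icc 1 (k+1)).erase i = insert (k+1) ((Finset.Icc 1 k).erase i) := by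
          intro i hi
          have hile : i ≤ k := by simpa using (Finset.mem_filter.mp hi).2
          ext j
          simp only [Finset.mem_erase, Finset.mem_Icc, Finset.mem_insert]
          omega
        have hsum_eq : ∑ i ∈ H.filter (· ≤ k),
            ((∏ j ∈ (Finset.Icc 1 (k+1)).erase i, Real.exp (-h j)) * (1 - Real.exp (-h i))) •
              ((blockM0 m n) ^ (k + 1 - i) * (D i * (blockM0 m n) ^ (i - 1)))
            = Real.exp (-h (k+1)) • ∑ i ∈ H.filter (· ≤ k),
                ((∏ j ∈ (Finset.Icc 1 k).erase i, Real.exp (-h j)) * (1 - Real.exp (-h i))) •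
                  ((blockM0 m n) ^ (k + 1 - i) * (D i * (blockM0 m n) ^ (i - 1))) := by
          rw [Finset.smul_sum]
          refine Finset.sum_congr rfl fun i hi => ?_
          rw [herase i hi, Finset.prod_insert (by
            intro hc
            have := (Finset.mem_erase.mp hc).2
            have := (Finset.mem_Icc.mp this).2
            omega), smul_smul]
          ring_nf
        rw [hsum_eq]
        rw [hexp, hML]
        simp only [Matrix.add_apply, Matrix.smul_apply, smul_eq_mul]
        have h2 := mul_le_mul_of_nonneg_left (hDLk u v) h1e
        nlinarith [h2, mul_nonneg h1e (mul_nonneg hpknn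
          (entry_mul_nonneg (hDnonneg _ hkIcc) (entry_pow_nonneg k) u v))]

/-- Entrywise lower bound for the product
`(e^{-h_ℓ} M₀ + (1 - e^{-h_ℓ}) D_ℓ) ⋯ (e^{-h_1} M₀ + (1 - e^{-h_1}) D_1)` (factor `i = 1`
applied first, i.e. rightmost): it dominates
`min {e^{-ℓτ̂}, e^{-(ℓ-1)τ̂} (1 - e^{-τ̂_v})} · (M₀^ℓ + Σ_{i ∈ H} D_i M₀^{i-1})`. -/
theorem product_entrywise_lower_bound
    (m n ℓ : ℕ) (hm : 2 ≤ m) (hn : 1 ≤ n) (hℓ : 1 ≤ ℓ)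
    (τv τhi : ℝ) (hτv : 0 < τv) (hττ : τv ≤ τhi)
    (D : ℕ → Matrix (Fin m × Fin n) (Fin m × Fin n) ℝ)
    (hDrow : ∀ i ∈ Finset.Icc 1 ℓ, ∀ u v : Fin m × Fin n, u.1.val ≠ 0 → D i u v = 0)
    (hDnonneg : ∀ i ∈ Finset.Icc 1 ℓ, ∀ u v : Fin m × Fin n, 0 ≤ D i u v)
    (h : ℕ → ℝ)
    (hh : ∀ i ∈ Finset.Icc 1 ℓ, 0 < h i ∧ h i ≤ τhi)
    (H : Finset ℕ) (hH : H ⊆ Finset.Icc 1 ℓ)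
    (hHτ : ∀ s ∈ H, τv ≤ h s)
    (P : ℕ → Matrix (Fin m × Fin n) (Fin m × Fin n) ℝ)
    (hP0 : P 0 = 1)
    (hPrec : ∀ i < ℓ, P (i + 1) =
      (Real.exp (-h (i + 1)) • blockM0 m n
        + (1 - Real.exp (-h (i + 1))) • D (i + 1)) * P i) :
    ∀ u v : Fin m × Fin n,
      min (Real.exp (-((ℓ : ℝ) * τhi)))
          (Real.exp (-(((ℓ : ℝ) - 1) * τhi)) * (1 - Real.exp (-τv))) *
        (((blockM0 m n) ^ ℓ + ∑ i ∈ H, D i * (blockM0 m n) ^ (i - 1)) u v)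
      ≤ P ℓ u v := by
  intro u v
  have hτhi : 0 < τhi := lt_of_lt_of_le hτv hττ
  set c0 := min (Real.exp (-((ℓ : ℝ) * τhi)))
      (Real.exp (-(((ℓ : ℝ) - 1) * τhi)) * (1 - Real.exp (-τv))) with hc0
  have hexpτv : Real.exp (-τv) < 1 := by
    rw [Real.exp_lt_one_iff]; linarith
  have hc0nn : 0 ≤ c0 := le_min (Real.exp_pos _).le
    (mul_nonneg (Real.exp_pos _).le (by linarith))
  have key := aux_key m n ℓ D hDnonneg h (fun i hi => (hh i hi).1) H hH P hP0 hPrec ℓ le_rfl u v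
  have hfil : H.filter (· ≤ ℓ) = H := by
    apply Finset.filter_true_of_mem
    intro i hi
    exact (Finset.mem_Icc.mp (hH hi)).2
  rw [hfil] at key
  refine le_trans ?_ key
  simp only [Matrix.add_apply, Matrix.sum_apply, Matrix.smul_apply, smul_eq_mul]
  rw [mul_add, Finset.mul_sum]
  have hbound1 : c0 * ((blockM0 m n) ^ ℓ) u v
      ≤ (∏ j ∈ Finset.Icc 1 ℓ, Real.exp (-h j)) * ((blockM0 m n) ^ ℓ) u v := by
    refine mul_le_mul_of_nonneg_right ?_ (entry_pow_nonneg ℓ u v)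
    refine le_trans (min_le_left _ _) ?_
    calc Real.exp (-((ℓ : ℝ) * τhi)) = Real.exp (-τhi) ^ ℓ := by
          rw [show -((ℓ : ℝ) * τhi) = (ℓ : ℕ) * (-τhi) by push_cast; ring, Real.exp_nat_mul]
      _ = ∏ _j ∈ Finset.Icc 1 ℓ, Real.exp (-τhi) := by
          rw [Finset.prod_const, Nat.card_Icc]; norm_num
      _ ≤ ∏ j ∈ Finset.Icc 1 ℓ, Real.exp (-h j) := by
          refine Finset.prod_le_prod (fun j _ => (Real.exp_pos _).le) (fun j hj => ?_)
          exact Real.exp_le_exp.mpr (by linarith [(hh j hj).2])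
  refine add_le_add hbound1 (Finset.sum_le_sum fun i hi => ?_)
  have hiIcc := hH hi
  obtain ⟨hi1, hiℓ⟩ := Finset.mem_Icc.mp hiIcc
  -- coefficient bound
  have hcard : ((Finset.Icc 1 ℓ).erase i).card = ℓ - 1 := by
    rw [Finset.card_erase_of_mem hiIcc, Nat.card_Icc]
    omega
  have hcoeff : c0 ≤ (∏ j ∈ (Finset.Icc 1 ℓ).erase i, Real.exp (-h j)) * (1 - Real.exp (-h i)) := by
    refine le_trans (min_le_right _ _) ?_
    have h1 : Real.exp (-(((ℓ : ℝ) - 1) * τhi)) ≤ ∏ j ∈ (Finset.Icc 1 ℓ).erase i, Real.exp (-h j) := by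
      calc Real.exp (-(((ℓ : ℝ) - 1) * τhi)) = Real.exp (-τhi) ^ (ℓ - 1) := by
            rw [show -(((ℓ : ℝ) - 1) * τhi) = ((ℓ - 1 : ℕ) : ℝ) * (-τhi) by
              push_cast [hℓ]; ring, Real.exp_nat_mul]
        _ = ∏ _j ∈ (Finset.Icc 1 ℓ).erase i, Real.exp (-τhi) := by
            rw [Finset.prod_const, hcard]
        _ ≤ _ := by
            refine Finset.prod_le_prod (fun j _ => (Real.exp_pos _).le) (fun j hj => ?_)
            have hjIcc := Finset.mem_of_mem_erase hj
            exact Real.exp_le_exp.mpr (by linarith [(hh j hjIcc).2])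
    have h2 : 1 - Real.exp (-τv) ≤ 1 - Real.exp (-h i) := by
      have := hHτ i hi
      have := Real.exp_le_exp.mpr (by linarith : -h i ≤ -τv)
      linarith
    exact mul_le_mul h1 h2 (by linarith) (Finset.prod_nonneg fun j _ => (Real.exp_pos _).le)
  -- matrix bound
  have hXnn : ∀ u v, 0 ≤ (D i * (blockM0 m n) ^ (i - 1)) u v :=
    entry_mul_nonneg (hDnonneg i hiIcc) (entry_pow_nonneg _)
  have hX0 : ∀ u v : Fin m × Fin n, u.1.val ≠ 0 → (D i * (blockM0 m n) ^ (i - 1)) u v = 0 := by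
    intro u v hu
    rw [Matrix.mul_apply]
    refine Finset.sum_eq_zero fun w _ => ?_
    rw [hDrow i hiIcc u w hu, zero_mul]
  have hdom := row0_dominated hX0 hXnn (ℓ - i) u v
  exact mul_le_mul hcoeff hdom (hXnn u v) (le_trans hc0nn hcoeff)
end
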